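/- Let t be a binary search tree and let x and y be keys occupying adjacent positions in the in-order traversal of t. Then it is not the case that both the subtree of t rooted at x and the subtree of t rooted at y are terminals, i.e., at least one of the two subtrees has a nonempty child. -/
import Mathlib


/-- Binary trees over a type `α`. -/
inductive BTree (α : Type*) where
  | nil : BTree α
  | node (l : BTree α) (a : α) (r : BTree α) : BTree α
  deriving DecidableEq

namespace BTree

variable {α : Type*}

/-- In-order traversal. -/
def inorder : BTree α → List α
  | nil => []
  | node l a r => inorder l ++ [a] ++ inorder r

/-- Key membership in a tree. -/
def Mem : BTree α → α → Prop
  | nil, _ => False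
  | node l a r, x => Mem l x ∨ x = a ∨ Mem r x

/-- `IsSubtree s t` means `s` occurs as a subtree of `t`. -/
inductive IsSubtree : BTree α → BTree α → Prop
  | refl (t : BTree α) : IsSubtree t t
  | left {s l r : BTree α} {a : α} : IsSubtree s l → IsSubtree s (node l a r)
  | right {s l r : BTree α} {a : α} : IsSubtree s r → IsSubtree s (node l a r)

/-- `x` and `y` occupy adjacent positions in the list `L` (`x` immediately before `y`). -/
def Adjacent (L : List α) (x y : α) : Prop :=
  ∃ i : ℕ, L[i]? = some x ∧ L[i + 1]? = some y

variable [LinearOrder α]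

/-- The binary-search-tree property: at every node, all keys of the left subtree are
smaller than the root key and all keys of the right subtree are larger. -/
def IsBST : BTree α → Prop
  | nil => True
  | node l a r => (∀ x, Mem l x → x < a) ∧ (∀ x, Mem r x → a < x) ∧ IsBST l ∧ IsBST r

/-- `Ancestor t x y`: the key `x` is an ancestor of the key `y` in `t`, i.e. `y` occurs
in a proper subtree of the subtree of `t` rooted at `x`. -/
def Ancestor (t : BTree α) (x y : α) : Prop :=
  ∃ l r : BTree α, IsSubtree (node l x r) t ∧ (Mem l y ∨ Mem r y)

/-- Depth (number of edges from the root) of a key in a binary search tree,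
computed by the standard search path. -/
def depth : BTree α → α → ℕ
  | nil, _ => 0
  | node l a r, x => if x = a then 0 else if x < a then depth l x + 1 else depth r x + 1

lemma mem_inorder (t : BTree α) (z : α) : Mem t z ↔ z ∈ inorder t := by
  induction t with
  | nil => simp [Mem, inorder]
  | node l a r ihl ihr =>
    simp [Mem, inorder, ihl, ihr, or_assoc]

lemma subtree_mem {s t : BTree α} (h : IsSubtree s t) {z : α} (hz : Mem s z) : Mem t z := by
  induction h with
  | refl => exact hz
  | left _ ih => exact Or.inl ih
  | right _ ih => exact Or.inr (Or.inr ih)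

lemma subtree_left {s l r : BTree α} {a b : α} (ht : IsBST (node l a r))
    (h : IsSubtree (node s b s') (node l a r)) (hb : b < a) : IsSubtree (node s b s') l := by
  cases h with
  | refl => exact absurd rfl (ne_of_lt hb)
  | left h => exact h
  | right h =>
    exact absurd (ht.2.1 b (subtree_mem h (Or.inr (Or.inl rfl)))) (lt_asymm hb)

lemma subtree_right {s l r : BTree α} {a b : α} (ht : IsBST (node l a r))
    (h : IsSubtree (node s b s') (node l a r)) (hb : a < b) : IsSubtree (node s b s') r := by
  cases h with
  | refl => exact absurd rfl (ne_of_gt hb)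
  | left h =>
    exact absurd (ht.1 b (subtree_mem h (Or.inr (Or.inl rfl)))) (lt_asymm hb)
  | right h => exact h

lemma inorder_ne_nil_of_mem {t : BTree α} {z : α} (h : Mem t z) : t ≠ nil := by
  intro e; subst e; exact h

/-- two keys adjacent in the in-order traversal of a BST cannot both be
terminals; at least one of their rooted subtrees has a nonempty child. -/
theorem not_both_terminals (t : BTree α) (ht : IsBST t) (x y : α)
    (hadj : Adjacent (inorder t) x y) (lx rx ly ry : BTree α)
    (hx : IsSubtree (node lx x rx) t) (hy : IsSubtree (node ly y ry) t) :
    lx ≠ nil ∨ rx ≠ nil ∨ ly ≠ nil ∨ ry ≠ nil := by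
  induction t with
  | nil => obtain ⟨i, h1, _⟩ := hadj; simp [inorder] at h1
  | node l a r ihl ihr =>
    obtain ⟨i, h1, h2⟩ := hadj
    obtain ⟨hla, hra, hbl, hbr⟩ := ht
    set A := inorder l with hA
    set B := inorder r with hB
    have hlen : (inorder (node l a r)) = (A ++ [a]) ++ B := by
      simp [inorder, hA, hB]
    rw [hlen] at h1 h2
    rcases lt_trichotomy (i + 1) A.length with hi | hi | hi
    · -- both in A
      rw [List.getElem?_append_left (by simp; omega),
          List.getElem?_append_left (by omega)] at h1
      rw [List.getElem?_append_left (by simp; omega),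
          List.getElem?_append_left (by omega)] at h2
      have hxl : Mem l x := (mem_inorder l x).2 (List.mem_of_getElem? h1)
      have hyl : Mem l y := (mem_inorder l y).2 (List.mem_of_getElem? h2)
      exact ihl hbl ⟨i, h1, h2⟩ (subtree_left ⟨hla, hra, hbl, hbr⟩ hx (hla x hxl))
        (subtree_left ⟨hla, hra, hbl, hbr⟩ hy (hla y hyl))
    · -- y = a, x last of A
      rw [List.getElem?_append_left (by simp; omega),
          List.getElem?_append_right (by omega)] at h2
      simp [hi] at h2
      subst h2
      have hlne : l ≠ nil := by
        intro e
        rw [e] at hA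
        simp [inorder, hA] at hi
      cases hy with
      | refl => exact Or.inr (Or.inr (Or.inl hlne))
      | left h =>
        exact absurd (hla a (subtree_mem h (Or.inr (Or.inl rfl)))) (lt_irrefl a)
      | right h =>
        exact absurd (hra a (subtree_mem h (Or.inr (Or.inl rfl)))) (lt_irrefl a)
    · rcases eq_or_lt_of_le (Nat.succ_le_of_lt hi) with hi2 | hi2
      · -- x = a (i = A.length), y first of B
        rw [List.getElem?_append_left (by simp; omega),
            List.getElem?_append_right (by omega)] at h1
        rw [show i - A.length = 0 by omega] at h1
        simp at h1
        subst h1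
        rw [List.getElem?_append_right (by simp; omega)] at h2
        have hrne : r ≠ nil := by
          intro e
          rw [e] at hB
          simp [inorder, hB] at h2
        cases hx with
        | refl => exact Or.inr (Or.inl hrne)
        | left h =>
          exact absurd (hla a (subtree_mem h (Or.inr (Or.inl rfl)))) (lt_irrefl a)
        | right h =>
          exact absurd (hra a (subtree_mem h (Or.inr (Or.inl rfl)))) (lt_irrefl a)
      · -- both in B
        rw [List.getElem?_append_right (by simp; omega)] at h1 h2
        simp only [List.length_append, List.length_singleton] at h1 h2
        have e1 : i - (A.length + 1) + 1 = i + 1 - (A.length + 1) := by omega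
        have hxb : Mem r x := (mem_inorder r x).2 (List.mem_of_getElem? h1)
        have hyb : Mem r y := (mem_inorder r y).2 (List.mem_of_getElem? h2)
        exact ihr hbr ⟨i - (A.length + 1), h1, by rw [e1]; exact h2⟩
          (subtree_right ⟨hla, hra, hbl, hbr⟩ hx (hra x hxb))
          (subtree_right ⟨hla, hra, hbl, hbr⟩ hy (hra y hyb))
end BTree
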